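/- Let F be the measure on ℝ with density x ↦ (α⁺/x)e^{−λ⁺x}·1_{(0,∞)}(x) + (α⁻/|x|)e^{−λ⁻|x|}·1_{(−∞,0)}(x) with α⁺, λ⁺, α⁻, λ⁻ > 0 and λ⁺ > 1. Then ∫_ℝ (e^x − 1) F(dx) = α⁺ ln(λ⁺/(λ⁺−1)) + α⁻ ln(λ⁻/(λ⁻+1)). -/

import Mathlib

open Real Set MeasureTheory Filter

lemma aux_hasDerivAt {c : ℝ} (hc : c ≠ 0) (x : ℝ) :
    HasDerivAt (fun y => -Real.exp (-(c * y)) / c) (Real.exp (-(c * x))) x := by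
  have h1 : HasDerivAt (fun y : ℝ => -(c * y)) (-c) x := by
    simpa using ((hasDerivAt_id x).const_mul c).fun_neg
  have h2 := (Real.hasDerivAt_exp (-(c * x))).comp x h1
  have h3 := (h2.fun_neg).div_const c
  refine h3.congr_deriv ?_
  field_simp


lemma exp_integral_Ioi {t : ℝ} (ht : 0 < t) :
    ∫ x in Ioi (0 : ℝ), Real.exp (-(t * x)) = 1 / t := by
  have hd : ∀ x ∈ Ici (0 : ℝ), HasDerivAt (fun y => -Real.exp (-(t * y)) / t)
      (Real.exp (-(t * x))) x := fun x _ => aux_hasDerivAt ht.ne' x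
  have hint : IntegrableOn (fun x => Real.exp (-(t * x))) (Ioi (0 : ℝ)) := by
    simpa [neg_mul] using exp_neg_integrableOn_Ioi 0 ht
  have htend : Tendsto (fun y => -Real.exp (-(t * y)) / t) atTop (nhds 0) := by
    have h1 : Tendsto (fun y : ℝ => -(t * y)) atTop atBot :=
      (tendsto_neg_atBot_iff).mpr (Tendsto.const_mul_atTop ht tendsto_id)
    have := (Real.tendsto_exp_atBot.comp h1).neg.div_const t
    simpa using this
  have := integral_Ioi_of_hasDerivAt_of_tendsto' hd hint htend
  simp at this
  rw [this]
  ring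

lemma exp_lintegral_Ioi {t : ℝ} (ht : 0 < t) :
    ∫⁻ x in Ioi (0 : ℝ), ENNReal.ofReal (Real.exp (-(t * x))) = ENNReal.ofReal (1 / t) := by
  rw [← ofReal_integral_eq_lintegral_ofReal]
  · rw [exp_integral_Ioi ht]
  · have := exp_neg_integrableOn_Ioi 0 ht; simp only [neg_mul] at this; exact this
  · exact Filter.Eventually.of_forall fun x => (Real.exp_pos _).le

lemma exp_intervalIntegral {a b x : ℝ} (hx : 0 < x) :
    ∫ t in a..b, Real.exp (-(t * x)) =
      (Real.exp (-(a * x)) - Real.exp (-(b * x))) / x := by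
  have hd : ∀ t ∈ uIcc a b, HasDerivAt (fun y => -Real.exp (-(x * y)) / x)
      (Real.exp (-(x * t))) t := fun t _ => aux_hasDerivAt hx.ne' t
  have hi : IntervalIntegrable (fun t => Real.exp (-(x * t))) volume a b :=
    (Real.continuous_exp.comp (by continuity)).intervalIntegrable a b
  have := intervalIntegral.integral_eq_sub_of_hasDerivAt hd hi
  simp_rw [mul_comm x _] at this
  rw [this]
  ring

lemma frullani_lintegral {a b : ℝ} (ha : 0 < a) (hab : a ≤ b) :
    ∫⁻ x in Ioi (0 : ℝ),
      ENNReal.ofReal ((Real.exp (-(a * x)) - Real.exp (-(b * x))) / x) =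
      ENNReal.ofReal (Real.log (b / a)) := by
  have hb : 0 < b := lt_of_lt_of_le ha hab
  have step1 : ∫⁻ x in Ioi (0 : ℝ),
      ENNReal.ofReal ((Real.exp (-(a * x)) - Real.exp (-(b * x))) / x) =
      ∫⁻ x in Ioi (0 : ℝ), ∫⁻ t in Ioc a b, ENNReal.ofReal (Real.exp (-(t * x))) := by
    refine setLIntegral_congr_fun measurableSet_Ioi (fun x hx => ?_)
    have hint : ∫ t in Ioc a b, Real.exp (-(t * x)) =
        (Real.exp (-(a * x)) - Real.exp (-(b * x))) / x := by
      rw [← intervalIntegral.integral_of_le hab]; exact exp_intervalIntegral hx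
    rw [← hint, ofReal_integral_eq_lintegral_ofReal]
    · exact (Real.continuous_exp.comp (by continuity)).integrableOn_Ioc
    · exact Filter.Eventually.of_forall fun t => (Real.exp_pos _).le
  rw [step1, lintegral_lintegral_swap]
  · have step2 : ∫⁻ t in Ioc a b, ∫⁻ x in Ioi (0 : ℝ),
        ENNReal.ofReal (Real.exp (-(t * x))) =
        ∫⁻ t in Ioc a b, ENNReal.ofReal (1 / t) := by
      refine setLIntegral_congr_fun measurableSet_Ioc
        (fun t ht => ?_)
      exact exp_lintegral_Ioi (lt_of_lt_of_le ha ht.1.le)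
    rw [step2, ← ofReal_integral_eq_lintegral_ofReal]
    · rw [← intervalIntegral.integral_of_le hab, integral_one_div_of_pos ha hb]
    · have : IntegrableOn (fun t : ℝ => 1 / t) (Icc a b) :=
        (ContinuousOn.integrableOn_compact isCompact_Icc
          (continuousOn_const.div continuousOn_id fun t ht => (lt_of_lt_of_le ha ht.1).ne'))
      exact this.mono_set Ioc_subset_Icc_self
    · filter_upwards [ae_restrict_mem measurableSet_Ioc] with t ht
      exact div_nonneg zero_le_one (ha.trans ht.1).le
  · apply Measurable.aemeasurable
    apply Measurable.ennreal_ofReal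
    exact (Real.continuous_exp.comp (by continuity)).measurable

lemma frullani_meas {a b : ℝ} :
    Measurable (fun x : ℝ => (Real.exp (-(a * x)) - Real.exp (-(b * x))) / x) :=
  (((Real.continuous_exp.comp ((continuous_const.mul continuous_id).neg)).sub
    (Real.continuous_exp.comp ((continuous_const.mul continuous_id).neg))).measurable).div
    measurable_id

lemma frullani_nonneg {a b : ℝ} (hab : a ≤ b) :
    0 ≤ᵐ[volume.restrict (Ioi (0:ℝ))]
      fun x : ℝ => (Real.exp (-(a * x)) - Real.exp (-(b * x))) / x := by
  filter_upwards [ae_restrict_mem measurableSet_Ioi] with x hx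
  have hx0 : (0:ℝ) < x := hx
  apply div_nonneg _ hx0.le
  have : -(b * x) ≤ -(a * x) := by nlinarith
  simpa using Real.exp_le_exp.mpr this

lemma frullani_integrableOn {a b : ℝ} (ha : 0 < a) (hab : a ≤ b) :
    IntegrableOn (fun x : ℝ => (Real.exp (-(a * x)) - Real.exp (-(b * x))) / x)
      (Ioi (0 : ℝ)) := by
  refine ⟨frullani_meas.aestronglyMeasurable, ?_⟩
  rw [hasFiniteIntegral_iff_ofReal (frullani_nonneg hab)]
  rw [frullani_lintegral ha hab]
  exact ENNReal.ofReal_lt_top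

lemma frullani_integral {a b : ℝ} (ha : 0 < a) (hab : a ≤ b) :
    ∫ x in Ioi (0 : ℝ), (Real.exp (-(a * x)) - Real.exp (-(b * x))) / x =
      Real.log (b / a) := by
  rw [integral_eq_lintegral_of_nonneg_ae (frullani_nonneg hab)
    frullani_meas.aestronglyMeasurable, frullani_lintegral ha hab,
    ENNReal.toReal_ofReal]
  exact Real.log_nonneg ((one_le_div ha).mpr hab)

/-- The density of the Lévy measure of a bilateral Gamma process. -/
noncomputable def bilateralGammaLevyDensity (ap lp am lm : ℝ) (x : ℝ) : ℝ :=
  if 0 < x then ap / x * Real.exp (-lp * x)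
  else if x < 0 then am / |x| * Real.exp (-lm * |x|)
  else 0

theorem bilateral_gamma_levy_integral_exp_sub_one
    (ap lp am lm : ℝ)
    (hap : 0 < ap) (hlp : 0 < lp) (ham : 0 < am) (hlm : 0 < lm)
    (hlp1 : 1 < lp) :
    ∫ x : ℝ, (Real.exp x - 1) * bilateralGammaLevyDensity ap lp am lm x =
      ap * Real.log (lp / (lp - 1)) + am * Real.log (lm / (lm + 1)) := by
  set f : ℝ → ℝ := fun x => (Real.exp x - 1) * bilateralGammaLevyDensity ap lp am lm x with hf
  have hlp1' : (0:ℝ) < lp - 1 := by linarith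
  -- right half
  have heq1 : EqOn f
      (fun x => ap * ((Real.exp (-((lp - 1) * x)) - Real.exp (-(lp * x))) / x)) (Ioi 0) := by
    intro x hx
    have hx0 : (0:ℝ) < x := hx
    have hexp : Real.exp (-((lp - 1) * x)) = Real.exp x * Real.exp (-(lp * x)) := by
      rw [← Real.exp_add]; ring_nf
    simp only [hf, bilateralGammaLevyDensity, if_pos hx0]
    rw [hexp]
    field_simp
  -- left half, reflected
  have heq2 : EqOn (fun y => f (-y))
      (fun y => (-am) * ((Real.exp (-(lm * y)) - Real.exp (-((lm + 1) * y))) / y)) (Ioi 0) := by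
    intro y hy
    have hy0 : (0:ℝ) < y := hy
    have h1 : ¬ (0:ℝ) < -y := by linarith
    have h2 : -y < (0:ℝ) := by linarith
    have habs : |(-y)| = y := by rw [abs_neg, abs_of_pos hy0]
    have hexp : Real.exp (-((lm + 1) * y)) = Real.exp (-y) * Real.exp (-(lm * y)) := by
      rw [← Real.exp_add]; ring_nf
    simp only [hf, bilateralGammaLevyDensity, if_neg h1, if_pos h2, habs]
    rw [hexp]
    have : -lm * y = -(lm * y) := by ring
    rw [this]
    field_simp
    ring
  have h1 : IntegrableOn f (Ioi 0) := by
    have hF := (frullani_integrableOn hlp1' (show lp - 1 ≤ lp by linarith)).const_mul ap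
    exact IntegrableOn.congr_fun hF (fun x hx => (heq1 hx).symm) measurableSet_Ioi
  have h2 : IntegrableOn f (Iic 0) := by
    have m : MeasurableEmbedding fun x : ℝ => -x := (Homeomorph.neg ℝ).measurableEmbedding
    have : IntegrableOn (fun y => f (-y)) (Ici (0:ℝ)) := by
      rw [integrableOn_Ici_iff_integrableOn_Ioi]
      have hF := (frullani_integrableOn hlm (show lm ≤ lm + 1 by linarith)).const_mul (-am)
      exact IntegrableOn.congr_fun hF (fun x hx => (heq2 hx).symm) measurableSet_Ioi
    have := this
    rw [show Ici (0:ℝ) = (fun x : ℝ => -x) ⁻¹' (Iic 0) by simp [neg_preimage]] at this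
    unfold IntegrableOn at this ⊢
    rw [← Measure.map_neg_eq_self (volume : Measure ℝ), m.restrict_map, m.integrable_map_iff]
    exact this
  have hint1 : ∫ x in Ioi (0:ℝ), f x = ap * Real.log (lp / (lp - 1)) := by
    rw [setIntegral_congr_fun measurableSet_Ioi heq1, integral_const_mul,
      frullani_integral hlp1' (by linarith)]
  have hint2 : ∫ x in Iic (0:ℝ), f x = am * Real.log (lm / (lm + 1)) := by
    have hc := integral_comp_neg_Ioi 0 f
    rw [neg_zero] at hc
    rw [← hc, setIntegral_congr_fun measurableSet_Ioi heq2, integral_const_mul,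
      frullani_integral hlm (by linarith)]
    rw [show lm / (lm + 1) = ((lm + 1) / lm)⁻¹ by rw [inv_div], Real.log_inv]
    ring
  rw [← intervalIntegral.integral_Iic_add_Ioi h2 h1, hint1, hint2]
  ring
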